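/- Let ρ be a probability measure on a measurable space 𝒳 of contexts. Suppose r : 𝒳 → ℝ and g : 𝒳 → ℝ are measurable functions, ε ≥ 0, and pointwise for ρ-almost every x one has 0 ≤ r(x) ≤ 2ε and r(x) = 0 whenever g(x) > 2ε. Suppose there exist constants c₀ > 0 and α > 0 such that ρ{x : g(x) ≤ t} ≤ c₀·t^α for all t ∈ [0,1], and that 2ε ≤ 1. Then the expected regret satisfies ∫ r dρ ≤ 2^{α+1}·c₀·ε^{α+1}. -/

import Mathlib

open MeasureTheory

/-- Lemma 4 (expected regret bound under the Tsybakov/no-tie condition):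
if ρ-a.e. `0 ≤ r ≤ 2ε` and `r = 0` whenever `g > 2ε`, and
`ρ{g ≤ t} ≤ c₀ t^α` for all `t ∈ [0,1]`, with `2ε ≤ 1`, then
`∫ r dρ ≤ 2^{α+1} c₀ ε^{α+1}`. -/
theorem stmt_3 {𝒳 : Type*} [MeasurableSpace 𝒳] (ρ : Measure 𝒳) [IsProbabilityMeasure ρ]
    (r g : 𝒳 → ℝ) (hr : Measurable r) (hgm : Measurable g)
    (ε : ℝ) (hε : 0 ≤ ε) (hε1 : 2 * ε ≤ 1)
    (hpoint : ∀ᵐ x ∂ρ, 0 ≤ r x ∧ r x ≤ 2 * ε ∧ (2 * ε < g x → r x = 0))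
    (c₀ α : ℝ) (hc₀ : 0 < c₀) (hα : 0 < α)
    (htsy : ∀ t ∈ Set.Icc (0:ℝ) 1, ρ {x | g x ≤ t} ≤ ENNReal.ofReal (c₀ * t ^ α)) :
    ∫ x, r x ∂ρ ≤ 2 ^ (α + 1) * c₀ * ε ^ (α + 1) := by
  set S : Set 𝒳 := {x | g x ≤ 2 * ε} with hS
  have hSm : MeasurableSet S := measurableSet_le hgm measurable_const
  have hint_r : Integrable r ρ := by
    refine (integrable_const (2 * ε)).mono' hr.aestronglyMeasurable ?_
    filter_upwards [hpoint] with x ⟨h0, h1, _⟩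
    rw [Real.norm_eq_abs, abs_of_nonneg h0]; exact h1
  have hint_i : Integrable (S.indicator fun _ => 2 * ε) ρ :=
    (integrable_const (2 * ε)).indicator hSm
  have hle : ∫ x, r x ∂ρ ≤ ∫ x, S.indicator (fun _ => 2 * ε) x ∂ρ := by
    refine integral_mono_ae hint_r hint_i ?_
    filter_upwards [hpoint] with x ⟨h0, h1, h2⟩
    by_cases hx : x ∈ S
    · rw [Set.indicator_of_mem hx]; exact h1
    · rw [Set.indicator_of_notMem hx]
      have : 2 * ε < g x := lt_of_not_ge hx
      rw [h2 this]
  have hieq : ∫ x, S.indicator (fun _ => 2 * ε) x ∂ρ = (ρ S).toReal * (2 * ε) := by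
    rw [integral_indicator_const _ hSm]; simp [smul_eq_mul, Measure.real]
  have htsy2 := htsy (2 * ε) ⟨by linarith, hε1⟩
  have hnn : 0 ≤ c₀ * (2 * ε) ^ α :=
    mul_nonneg hc₀.le (Real.rpow_nonneg (by linarith) _)
  have hmeas : (ρ S).toReal ≤ c₀ * (2 * ε) ^ α := by
    have := ENNReal.toReal_mono (by simp) htsy2
    rwa [ENNReal.toReal_ofReal hnn] at this
  have hfinal : (ρ S).toReal * (2 * ε) ≤ c₀ * (2 * ε) ^ α * (2 * ε) :=
    mul_le_mul_of_nonneg_right hmeas (by linarith)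
  have halg : c₀ * (2 * ε) ^ α * (2 * ε) = 2 ^ (α + 1) * c₀ * ε ^ (α + 1) := by
    rcases eq_or_lt_of_le hε with h | h
    · rw [← h]
      simp [Real.zero_rpow (by linarith : α + 1 ≠ 0), Real.zero_rpow hα.ne',
        mul_zero, zero_mul]
    · rw [Real.mul_rpow (by norm_num) hε, Real.rpow_add_one (by norm_num : (2:ℝ) ≠ 0),
        Real.rpow_add_one h.ne']
      ring
  calc ∫ x, r x ∂ρ ≤ (ρ S).toReal * (2 * ε) := hle.trans_eq hieq
    _ ≤ c₀ * (2 * ε) ^ α * (2 * ε) := hfinal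
    _ = 2 ^ (α + 1) * c₀ * ε ^ (α + 1) := halg
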